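/- Let T be a simplex with diameter h, Γ ∩ T a piecewise smooth hypersurface patch inside T admitting a Lipschitz graph parametrization over a plane (assumptions G1–G2). Then for any polynomial v of degree ≤ k on T, ‖v‖_{L^2(Γ∩T)} ≤ C h^{-1/2} ‖v‖_{L^2(T)} with C independent of the location of Γ within T. -/

import Mathlib

open MeasureTheory
open scoped RealInnerProductSpace NNReal

open Metric
open scoped ENNReal Pointwise

namespace CutTrace

variable {d : ℕ}

variable {d : ℕ}

noncomputable def pe (p : MvPolynomial (Fin d) ℝ) : EuclideanSpace ℝ (Fin d) → ℝ :=
  fun x => MvPolynomial.eval (fun i => x i) p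

lemma pe_analytic (p : MvPolynomial (Fin d) ℝ) :
    AnalyticOnNhd ℝ (pe p) Set.univ := by
  have := AnalyticOnNhd.eval_continuousLinearMap
    (𝕜 := ℝ) (PiLp.continuousLinearEquiv 2 ℝ (fun _ : Fin d => ℝ)).toContinuousLinearMap p
  exact this

lemma pe_continuous (p : MvPolynomial (Fin d) ℝ) : Continuous (pe p) := by
  rw [← continuousOn_univ]
  exact (pe_analytic p).continuousOn

lemma pe_smul (c : ℝ) (p : MvPolynomial (Fin d) ℝ) (x : EuclideanSpace ℝ (Fin d)) :
    pe (c • p) x = c * pe p x := by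
  simp [pe, MvPolynomial.smul_eq_C_mul]

lemma eq_zero_of_pe_ball {p : MvPolynomial (Fin d) ℝ} {x₀ : EuclideanSpace ℝ (Fin d)} {r : ℝ}
    (hr : 0 < r) (hz : ∀ x ∈ ball x₀ r, pe p x = 0) : p = 0 := by
  have h0 : Set.EqOn (pe p) 0 Set.univ := by
    apply (pe_analytic p).eqOn_zero_of_preconnected_of_eventuallyEq_zero
      isPreconnected_univ (Set.mem_univ x₀)
    filter_upwards [ball_mem_nhds x₀ hr] with x hx using hz x hx
  apply MvPolynomial.funext
  intro x
  simpa [pe] using h0 (Set.mem_univ (WithLp.toLp 2 x : EuclideanSpace ℝ (Fin d)))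

lemma sq_integral_pos {p : MvPolynomial (Fin d) ℝ} (hp : p ≠ 0) {r : ℝ} (hr : 0 < r) :
    0 < ∫ y in closedBall (0 : EuclideanSpace ℝ (Fin d)) r, (pe p y) ^ 2 := by
  have hcont : Continuous fun y => (pe p y) ^ 2 := (pe_continuous p).pow 2
  have hint : IntegrableOn (fun y => (pe p y) ^ 2)
      (closedBall (0 : EuclideanSpace ℝ (Fin d)) r) volume :=
    hcont.continuousOn.integrableOn_compact (isCompact_closedBall _ _)
  rw [setIntegral_pos_iff_support_of_nonneg_ae
    (Filter.Eventually.of_forall fun y => sq_nonneg _) hint]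
  obtain ⟨x₀, hx₀b, hx₀⟩ : ∃ x₀ ∈ ball (0 : EuclideanSpace ℝ (Fin d)) r, pe p x₀ ≠ 0 := by
    by_contra hc
    push_neg at hc
    exact hp (eq_zero_of_pe_ball hr hc)
  have hopen : IsOpen ({x | pe p x ≠ 0} ∩ ball (0 : EuclideanSpace ℝ (Fin d)) r) :=
    ((isOpen_ne.preimage (pe_continuous p))).inter isOpen_ball
  have hsub : {x | pe p x ≠ 0} ∩ ball (0 : EuclideanSpace ℝ (Fin d)) r ⊆
      Function.support (fun y => (pe p y) ^ 2) ∩ closedBall 0 r := by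
    rintro x ⟨h1, h2⟩
    exact ⟨pow_ne_zero _ h1, ball_subset_closedBall h2⟩
  calc (0 : ℝ≥0∞) < volume ({x | pe p x ≠ 0} ∩ ball (0 : EuclideanSpace ℝ (Fin d)) r) :=
        hopen.measure_pos volume ⟨x₀, hx₀, hx₀b⟩
    _ ≤ _ := measure_mono hsub

variable {d : ℕ}



set_option maxHeartbeats 1000000 in
set_option synthInstance.maxHeartbeats 400000 in
lemma poly_inverse_estimate (d k : ℕ) {ρ : ℝ} (hρ : 0 < ρ) :
    ∃ C₁ > 0, ∀ p : MvPolynomial (Fin d) ℝ, p.totalDegree ≤ k →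
      ∀ x ∈ closedBall (0 : EuclideanSpace ℝ (Fin d)) 1,
        (pe p x) ^ 2 ≤ C₁ * ∫ y in closedBall (0 : EuclideanSpace ℝ (Fin d)) ρ, (pe p y) ^ 2 := by
  classical
  set P := MvPolynomial.restrictTotalDegree (Fin d) ℝ k with hP
  haveI : Module.Finite ℝ P := inferInstance
  set n := Module.finrank ℝ P with hn
  set b : Module.Basis (Fin n) ℝ P := Module.finBasis ℝ P with hb
  set F : (Fin n → ℝ) → EuclideanSpace ℝ (Fin d) → ℝ :=
    fun c x => ∑ i, c i * pe (b i : MvPolynomial (Fin d) ℝ) x with hF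
  have key : ∀ (q : P) (x : EuclideanSpace ℝ (Fin d)),
      pe (q : MvPolynomial (Fin d) ℝ) x = F (b.equivFun q) x := by
    intro q x
    conv_lhs => rw [← b.sum_equivFun q]
    rw [hF]
    push_cast
    simp only [pe, map_sum, MvPolynomial.smul_eq_C_mul, map_mul, MvPolynomial.eval_C]
  have hFsmul : ∀ (a : ℝ) (c : Fin n → ℝ) (x), F (a • c) x = a * F c x := by
    intro a c x
    simp only [hF, Pi.smul_apply, smul_eq_mul, Finset.mul_sum, mul_assoc]
  have hFcont : Continuous fun cx : (Fin n → ℝ) × EuclideanSpace ℝ (Fin d) => F cx.1 cx.2 := by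
    apply continuous_finset_sum
    intro i _
    exact ((continuous_apply i).comp continuous_fst).mul ((pe_continuous _).comp continuous_snd)
  set s := closedBall (0 : EuclideanSpace ℝ (Fin d)) ρ with hs
  have hint : ∀ φ : EuclideanSpace ℝ (Fin d) → ℝ, Continuous φ → IntegrableOn φ s volume :=
    fun φ h => h.continuousOn.integrableOn_compact (isCompact_closedBall _ _)
  set g : (Fin n → ℝ) → ℝ := fun c => ∫ y in s, (F c y) ^ 2 with hg
  have hgexp : ∀ c, g c = ∑ i, ∑ j,
      c i * c j * ∫ y in s, pe (b i : MvPolynomial (Fin d) ℝ) y * pe (b j : MvPolynomial (Fin d) ℝ) y := by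
    intro c
    have hptw : ∀ y, (F c y) ^ 2 = ∑ i, ∑ j,
        c i * c j * (pe (b i : MvPolynomial (Fin d) ℝ) y * pe (b j : MvPolynomial (Fin d) ℝ) y) := by
      intro y
      rw [sq, hF, Finset.sum_mul_sum]
      refine Finset.sum_congr rfl fun i _ => Finset.sum_congr rfl fun j _ => by ring
    rw [hg]
    simp only [hptw]
    rw [integral_finset_sum]
    · refine Finset.sum_congr rfl fun i _ => ?_
      rw [integral_finset_sum]
      · exact Finset.sum_congr rfl fun j _ => integral_const_mul _ _
      · intro j _
        exact (hint _ (continuous_const.mul ((pe_continuous _).mul (pe_continuous _))))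
    · intro i _
      apply integrable_finset_sum
      intro j _
      exact (hint _ (continuous_const.mul ((pe_continuous _).mul (pe_continuous _))))
  have hgcont : Continuous g := by
    rw [show g = fun c => ∑ i, ∑ j, c i * c j *
        ∫ y in s, pe (b i : MvPolynomial (Fin d) ℝ) y * pe (b j : MvPolynomial (Fin d) ℝ) y
      from funext hgexp]
    fun_prop
  have hgnonneg : ∀ c, 0 ≤ g c := fun c => integral_nonneg fun y => sq_nonneg _
  have hgsmul : ∀ (a : ℝ) (c : Fin n → ℝ), g (a • c) = a ^ 2 * g c := by
    intro a c
    rw [hg]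
    simp only [hFsmul, mul_pow]
    exact integral_const_mul _ _
  have hgpos : ∀ c : Fin n → ℝ, c ≠ 0 → 0 < g c := by
    intro c hc
    set q : P := b.equivFun.symm c with hq
    have hq0 : (q : MvPolynomial (Fin d) ℝ) ≠ 0 := by
      simp only [ne_eq, ZeroMemClass.coe_eq_zero]
      intro h
      apply hc
      rw [hq] at h
      simpa [h] using (b.equivFun.apply_symm_apply c).symm
      
    have : g c = ∫ y in s, (pe (q : MvPolynomial (Fin d) ℝ) y) ^ 2 := by
      rw [hg]
      have : ∀ y, pe (q : MvPolynomial (Fin d) ℝ) y = F c y := by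
        intro y
        rw [key q y, hq, b.equivFun.apply_symm_apply]
      simp only [this]
    rw [this]
    exact sq_integral_pos hq0 hρ
  -- trivial case: all polynomials of degree ≤ k are zero-dimensional family with only 0
  by_cases hdeg : ∀ p : MvPolynomial (Fin d) ℝ, p.totalDegree ≤ k → p = 0
  · refine ⟨1, one_pos, fun p hp x _ => ?_⟩
    rw [hdeg p hp]
    simp [pe]
  · push_neg at hdeg
    obtain ⟨p₀, hp₀k, hp₀⟩ := hdeg
    have hc₀ : ∃ c₀ : Fin n → ℝ, c₀ ≠ 0 := by
      refine ⟨b.equivFun ⟨p₀, (MvPolynomial.mem_restrictTotalDegree _ _ _).2 hp₀k⟩, ?_⟩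
      intro h
      apply hp₀
      have := b.equivFun.injective (a₁ := ⟨p₀, (MvPolynomial.mem_restrictTotalDegree _ _ _).2 hp₀k⟩)
        (a₂ := 0) (by simpa using h)
      simpa [Subtype.ext_iff] using this
    obtain ⟨c₀, hc₀⟩ := hc₀
    have hu₀ : ‖c₀‖⁻¹ • c₀ ∈ sphere (0 : Fin n → ℝ) 1 := by
      simp [norm_smul, abs_of_nonneg (inv_nonneg.2 (norm_nonneg c₀)),
        inv_mul_cancel₀ (norm_ne_zero_iff.2 hc₀)]
    have hKne : (sphere (0 : Fin n → ℝ) 1).Nonempty := ⟨_, hu₀⟩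
    obtain ⟨um, humem, hum⟩ := (isCompact_sphere (0 : Fin n → ℝ) 1).exists_isMinOn hKne
      hgcont.continuousOn
    have hm : 0 < g um := hgpos um (by
      intro h
      rw [h] at humem
      simp at humem)
    obtain ⟨⟨uM, xM⟩, hMmem, hM⟩ := ((isCompact_sphere (0 : Fin n → ℝ) 1).prod
      (isCompact_closedBall (0 : EuclideanSpace ℝ (Fin d)) 1)).exists_isMaxOn
      (hKne.prod ⟨0, mem_closedBall_self zero_le_one⟩)
      ((hFcont.pow 2).continuousOn)
    set M := (F uM xM) ^ 2 with hMdef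
    have hMnonneg : 0 ≤ M := sq_nonneg _
    refine ⟨M / g um + 1, by positivity, fun p hp x hx => ?_⟩
    set c := b.equivFun ⟨p, (MvPolynomial.mem_restrictTotalDegree _ _ _).2 hp⟩ with hc
    have hpe : ∀ y, pe p y = F c y := fun y =>
      key ⟨p, (MvPolynomial.mem_restrictTotalDegree _ _ _).2 hp⟩ y
    have hgc : (∫ y in s, (pe p y) ^ 2) = g c := by
      rw [hg]; simp only [hpe]
    rw [hgc, hpe]
    rcases eq_or_ne c 0 with h0 | h0
    · rw [h0]
      have : F (0 : Fin n → ℝ) x = 0 := by simp [hF]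
      rw [this]
      have hg0 : g (0 : Fin n → ℝ) = 0 := by
        have := hgsmul 0 0
        simpa using this
      rw [hg0]
      nlinarith [hm, hMnonneg]
    · set u := ‖c‖⁻¹ • c with hu
      have hum' : u ∈ sphere (0 : Fin n → ℝ) 1 := by
        simp [hu, norm_smul, abs_of_nonneg (inv_nonneg.2 (norm_nonneg c)),
          inv_mul_cancel₀ (norm_ne_zero_iff.2 h0)]
      have hcu : c = ‖c‖ • u := by
        rw [hu, smul_smul, mul_inv_cancel₀ (norm_ne_zero_iff.2 h0), one_smul]
      have hF2 : (F c x) ^ 2 = ‖c‖ ^ 2 * (F u x) ^ 2 := by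
        conv_lhs => rw [hcu]
        rw [hFsmul, mul_pow]
      have hgc2 : g c = ‖c‖ ^ 2 * g u := by
        conv_lhs => rw [hcu]
        rw [hgsmul]
      have hFuM : (F u x) ^ 2 ≤ M := hM (Set.mk_mem_prod hum' hx)
      have hgum : g um ≤ g u := hum hum'
      have hMgu : M ≤ (M / g um) * g u := by
        rw [div_mul_eq_mul_div, le_div_iff₀ hm]
        calc M * g um ≤ M * g u := by nlinarith
          _ = M * g u := rfl
      calc (F c x) ^ 2 = ‖c‖ ^ 2 * (F u x) ^ 2 := hF2
        _ ≤ ‖c‖ ^ 2 * M := by nlinarith [sq_nonneg ‖c‖]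
        _ ≤ ‖c‖ ^ 2 * ((M / g um) * g u) := by nlinarith [sq_nonneg ‖c‖]
        _ = (M / g um) * g c := by rw [hgc2]; ring
        _ ≤ (M / g um + 1) * g c := by nlinarith [hgnonneg c]

variable {d : ℕ}



lemma totalDegree_bind₁_le (g : Fin d → MvPolynomial (Fin d) ℝ)
    (hg : ∀ i, (g i).totalDegree ≤ 1) (p : MvPolynomial (Fin d) ℝ) :
    (MvPolynomial.bind₁ g p).totalDegree ≤ p.totalDegree := by
  conv_lhs => rw [p.as_sum, map_sum]
  refine (MvPolynomial.totalDegree_finset_sum _ _).trans ?_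
  refine Finset.sup_le fun m hm => ?_
  rw [MvPolynomial.bind₁_monomial]
  refine (MvPolynomial.totalDegree_mul _ _).trans ?_
  rw [MvPolynomial.totalDegree_C, zero_add]
  refine le_trans ((MvPolynomial.totalDegree_finset_prod _ _).trans ?_)
    (MvPolynomial.le_totalDegree hm)
  calc ∑ i ∈ m.support, ((g i) ^ m i).totalDegree
      ≤ ∑ i ∈ m.support, m i * 1 := Finset.sum_le_sum fun i _ =>
        (MvPolynomial.totalDegree_pow _ _).trans
          (Nat.mul_le_mul_left _ (hg i))
    _ = m.sum fun _ e => e := by simp [Finsupp.sum]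

lemma aeval_eq_eval' (f : Fin d → ℝ) (p : MvPolynomial (Fin d) ℝ) :
    MvPolynomial.aeval f p = MvPolynomial.eval f p := by
  rw [MvPolynomial.aeval_def, Algebra.algebraMap_self]
  rfl

lemma pe_bind₁_affine (z : EuclideanSpace ℝ (Fin d)) (h : ℝ) (p : MvPolynomial (Fin d) ℝ)
    (y : EuclideanSpace ℝ (Fin d)) :
    pe (MvPolynomial.bind₁
        (fun i => MvPolynomial.C (z i) + MvPolynomial.C h * MvPolynomial.X i) p) y
      = pe p (z + h • y) := by
  simp only [pe, ← aeval_eq_eval', MvPolynomial.aeval_bind₁]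
  congr 2
  funext i
  simp [PiLp.add_apply, PiLp.smul_apply, smul_eq_mul, aeval_eq_eval']

lemma totalDegree_affine (z : EuclideanSpace ℝ (Fin d)) (h : ℝ) (p : MvPolynomial (Fin d) ℝ) :
    (MvPolynomial.bind₁
        (fun i => MvPolynomial.C (z i) + MvPolynomial.C h * MvPolynomial.X i) p).totalDegree
      ≤ p.totalDegree := by
  refine totalDegree_bind₁_le _ (fun i => ?_) p
  refine (MvPolynomial.totalDegree_add _ _).trans ?_
  simp only [MvPolynomial.totalDegree_C]
  refine max_le (Nat.zero_le _) ((MvPolynomial.totalDegree_mul _ _).trans ?_)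
  simp [MvPolynomial.totalDegree_C, MvPolynomial.totalDegree_X]

lemma scale_integral (p : MvPolynomial (Fin d) ℝ) (z : EuclideanSpace ℝ (Fin d))
    {h : ℝ} (hh : 0 < h) {r : ℝ} (hr : 0 ≤ r) :
    ∫ y in closedBall (0 : EuclideanSpace ℝ (Fin d)) r, (pe p (z + h • y)) ^ 2
      = (h ^ d)⁻¹ * ∫ x in closedBall z (r * h), (pe p x) ^ 2 := by
  set G : EuclideanSpace ℝ (Fin d) → ℝ :=
    (closedBall z (r * h)).indicator (fun x => (pe p x) ^ 2) with hG
  have hmem : ∀ y : EuclideanSpace ℝ (Fin d), z + h • y ∈ closedBall z (r * h) ↔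
      y ∈ closedBall (0 : EuclideanSpace ℝ (Fin d)) r := by
    intro y
    rw [mem_closedBall, mem_closedBall, dist_eq_norm, dist_eq_norm, add_sub_cancel_left,
      norm_smul, Real.norm_eq_abs, abs_of_pos hh, sub_zero, mul_comm]
    exact mul_le_mul_iff_of_pos_right hh
  have hind : ∀ y, (closedBall (0 : EuclideanSpace ℝ (Fin d)) r).indicator
      (fun y => (pe p (z + h • y)) ^ 2) y = G (z + h • y) := by
    intro y
    rw [hG]
    by_cases hy : y ∈ closedBall (0 : EuclideanSpace ℝ (Fin d)) r
    · rw [Set.indicator_of_mem hy, Set.indicator_of_mem ((hmem y).2 hy)]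
    · rw [Set.indicator_of_notMem hy, Set.indicator_of_notMem (fun hc => hy ((hmem y).1 hc))]
  calc ∫ y in closedBall (0 : EuclideanSpace ℝ (Fin d)) r, (pe p (z + h • y)) ^ 2
      = ∫ y, G (z + h • y) := by
        rw [← integral_indicator (measurableSet_closedBall)]
        exact integral_congr_ae (Filter.Eventually.of_forall hind)
    _ = |((h ^ Module.finrank ℝ (EuclideanSpace ℝ (Fin d)))⁻¹)| • ∫ w, G (z + w) := by
        exact Measure.integral_comp_smul volume (fun w => G (z + w)) h
    _ = (h ^ d)⁻¹ * ∫ x, G x := by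
        rw [integral_add_left_eq_self, finrank_euclideanSpace_fin, smul_eq_mul,
          abs_of_pos (by positivity)]
    _ = (h ^ d)⁻¹ * ∫ x in closedBall z (r * h), (pe p x) ^ 2 := by
        rw [hG, integral_indicator (measurableSet_closedBall)]

lemma VB_lt_top (m : ℕ) :
    μH[(m : ℝ)] (closedBall (0 : EuclideanSpace ℝ (Fin m)) 1) < ⊤ := by
  set K : ℝ≥0 := (Fintype.card (Fin m) : ℝ≥0) ^ (1 / (2:ℝ≥0∞)).toReal with hK
  set J : (Fin m → ℝ) → EuclideanSpace ℝ (Fin m) :=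
    fun x => (WithLp.equiv 2 (Fin m → ℝ)).symm x with hJ
  have hlip : LipschitzWith K J :=
    (PiLp.antilipschitzWith_ofLp 2 (fun _ : Fin m => ℝ)).to_rightInverse
      (WithLp.equiv 2 (Fin m → ℝ)).right_inv
  have hsub : closedBall (0 : EuclideanSpace ℝ (Fin m)) 1 ⊆
      J '' (closedBall (0 : Fin m → ℝ) 1) := by
    intro x hx
    refine ⟨WithLp.equiv 2 (Fin m → ℝ) x, ?_, (WithLp.equiv 2 (Fin m → ℝ)).symm_apply_apply x⟩
    have := (PiLp.lipschitzWith_ofLp 2 (fun _ : Fin m => ℝ)).dist_le_mul x 0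
    simp only [NNReal.coe_one, one_mul] at this
    rw [mem_closedBall] at hx ⊢
    have h0 : (WithLp.equiv 2 (Fin m → ℝ)) 0 = (0 : Fin m → ℝ) := rfl
    calc dist (WithLp.equiv 2 (Fin m → ℝ) x) 0
        = dist (WithLp.equiv 2 (Fin m → ℝ) x) (WithLp.equiv 2 (Fin m → ℝ) 0) := by rw [h0]
      _ ≤ dist x 0 := this
      _ ≤ 1 := hx
  calc μH[(m : ℝ)] (closedBall (0 : EuclideanSpace ℝ (Fin m)) 1)
      ≤ μH[(m : ℝ)] (J '' (closedBall (0 : Fin m → ℝ) 1)) := measure_mono hsub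
    _ ≤ (K : ℝ≥0∞) ^ (m : ℝ) * μH[(m : ℝ)] (closedBall (0 : Fin m → ℝ) 1) :=
        hlip.hausdorffMeasure_image_le (Nat.cast_nonneg m) _
    _ < ⊤ := by
        apply ENNReal.mul_lt_top
        · exact ENNReal.rpow_lt_top_of_nonneg (Nat.cast_nonneg m) ENNReal.coe_ne_top
        · have heq : μH[(m : ℝ)] (closedBall (0 : Fin m → ℝ) 1) =
              volume (closedBall (0 : Fin m → ℝ) 1) := by
            rw [← hausdorffMeasure_pi_real (ι := Fin m)]
            norm_num
          rw [heq]
          exact (isCompact_closedBall _ _).measure_lt_top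

lemma cball_scale (m : ℕ) {s : ℝ} (hs : 0 ≤ s) {r : ℝ} (hr : 0 < r) :
    μH[s] (closedBall (0 : EuclideanSpace ℝ (Fin m)) r)
      = ((‖r‖₊ : ℝ≥0∞) ^ s) * μH[s] (closedBall (0 : EuclideanSpace ℝ (Fin m)) 1) := by
  have hball : closedBall (0 : EuclideanSpace ℝ (Fin m)) r
      = r • closedBall (0 : EuclideanSpace ℝ (Fin m)) 1 := by
    rw [_root_.smul_closedBall _ _ zero_le_one, smul_zero, Real.norm_eq_abs, abs_of_pos hr, mul_one]
  rw [hball, Measure.hausdorffMeasure_smul₀ hs (ne_of_gt hr), ENNReal.smul_def, smul_eq_mul,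
    ENNReal.coe_rpow_of_nonneg _ hs]

lemma hyperplane_cap_bound {d : ℕ} (hd : 1 ≤ d) {e : EuclideanSpace ℝ (Fin d)}
    (z₀ w : EuclideanSpace ℝ (Fin d)) (he : ‖e‖ = 1)
    (hw : ⟪w - z₀, e⟫ = 0) {h : ℝ} (hh : 0 < h) :
    μH[(d : ℝ) - 1] ({y : EuclideanSpace ℝ (Fin d) | ⟪y - z₀, e⟫ = 0} ∩ closedBall w h)
      ≤ ((‖h‖₊ : ℝ≥0∞) ^ ((d : ℝ) - 1)) *
        μH[(d : ℝ) - 1] (closedBall (0 : EuclideanSpace ℝ (Fin (d - 1))) 1) := by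
  have hdm : (0 : ℝ) ≤ (d : ℝ) - 1 := by
    have : (1 : ℝ) ≤ (d : ℝ) := by exact_mod_cast hd
    linarith
  have he0 : e ≠ 0 := fun hc => by simp [hc] at he
  set W : Submodule ℝ (EuclideanSpace ℝ (Fin d)) := (ℝ ∙ e)ᗮ with hW
  have hrank : Module.finrank ℝ W = d - 1 := by
    have h1 : Module.finrank ℝ (ℝ ∙ e) = 1 := finrank_span_singleton he0
    have h2 := Submodule.finrank_add_finrank_orthogonal
      (K := (ℝ ∙ e : Submodule ℝ (EuclideanSpace ℝ (Fin d))))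
    rw [h1, finrank_euclideanSpace_fin, ← hW] at h2
    omega
  set B := stdOrthonormalBasis ℝ W with hB
  set ψ : EuclideanSpace ℝ (Fin (Module.finrank ℝ W)) → EuclideanSpace ℝ (Fin d) :=
    fun u => w + (B.repr.symm u : W) with hψ
  have hiso : Isometry ψ := by
    apply Isometry.of_dist_eq
    intro a b
    rw [hψ]
    simp only [dist_add_left]
    rw [← Subtype.dist_eq]
    exact B.repr.symm.dist_map a b
  have hsub : {y : EuclideanSpace ℝ (Fin d) | ⟪y - z₀, e⟫ = 0} ∩ closedBall w h ⊆
      ψ '' (closedBall 0 h) := by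
    rintro y ⟨hy1, hy2⟩
    have hyW : y - w ∈ W := by
      rw [hW, Submodule.mem_orthogonal]
      intro u hu
      obtain ⟨c, rfl⟩ := Submodule.mem_span_singleton.1 hu
      rw [real_inner_smul_left]
      have hsplit : ⟪e, y - w⟫ = ⟪y - z₀, e⟫ - ⟪w - z₀, e⟫ := by
        rw [real_inner_comm, show y - w = (y - z₀) - (w - z₀) by abel, inner_sub_left]
      rw [hsplit, hy1, hw]
      ring
    refine ⟨B.repr ⟨y - w, hyW⟩, ?_, ?_⟩
    · rw [mem_closedBall, dist_zero_right, B.repr.norm_map]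
      have : ‖y - w‖ = dist y w := (dist_eq_norm y w).symm
      rw [show ‖(⟨y - w, hyW⟩ : W)‖ = ‖y - w‖ from rfl, this]
      exact mem_closedBall.1 hy2
    · rw [hψ]
      simp only [LinearIsometryEquiv.symm_apply_apply]
      show w + (y - w) = y
      abel
  calc μH[(d : ℝ) - 1] ({y : EuclideanSpace ℝ (Fin d) | ⟪y - z₀, e⟫ = 0} ∩ closedBall w h)
      ≤ μH[(d : ℝ) - 1] (ψ '' (closedBall 0 h)) := measure_mono hsub
    _ = μH[(d : ℝ) - 1] (closedBall (0 : EuclideanSpace ℝ (Fin (Module.finrank ℝ W))) h) :=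
        hiso.hausdorffMeasure_image (Or.inl hdm) _
    _ ≤ _ := by
        rw [cball_scale _ hdm hh, hrank]

end CutTrace

open CutTrace

/-- Cut-element inverse trace inequality: for every dimension `d`,
polynomial degree `k`, shape-regularity constant `ρ > 0` and Lipschitz parametrization
bound `L`, there is `C > 0` such that for every convex cell `T` of diameter `h`
containing a ball of radius `ρ h`, and every hypersurface `Γ` such that `Γ ∩ T` is the
image of a plane section `S ∩ T` under an `L`-Lipschitz parametrization
(assumptions G1–G2), every polynomial `v` of total degree at most `k` satisfies
`‖v‖²_{L²(Γ∩T)} ≤ C h⁻¹ ‖v‖²_{L²(T)}`, with `C` independent of how `Γ` cuts `T`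
(`Γ ∩ T` carries the `(d−1)`-dimensional Hausdorff measure). -/
theorem cut_trace_inequality_polynomials
    (d k : ℕ) (ρ : ℝ) (hρ : 0 < ρ) (L : ℝ≥0) :
    ∃ C > 0, ∀ (T Γ : Set (EuclideanSpace ℝ (Fin d))) (h : ℝ), 0 < h →
      Convex ℝ T → Metric.diam T = h →
      (∃ z, Metric.closedBall z (ρ * h) ⊆ T) →
      (∃ (e z₀ : EuclideanSpace ℝ (Fin d)) (f : EuclideanSpace ℝ (Fin d) → EuclideanSpace ℝ (Fin d)),
        ‖e‖ = 1 ∧ LipschitzWith L f ∧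
        Γ ∩ T = f '' ({y | ⟪y - z₀, e⟫ = 0} ∩ T)) →
      ∀ v : EuclideanSpace ℝ (Fin d) → ℝ,
        (∃ p : MvPolynomial (Fin d) ℝ, p.totalDegree ≤ k ∧
          ∀ x, v x = MvPolynomial.eval (fun i => x i) p) →
        (∫ x in Γ ∩ T, ‖v x‖ ^ 2 ∂(MeasureTheory.Measure.hausdorffMeasure ((d : ℝ) - 1)))
          ≤ C * h⁻¹ * ∫ x in T, ‖v x‖ ^ 2 := by
  obtain ⟨C₁, hC₁, hC₁est⟩ := poly_inverse_estimate d k hρ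
  set VB : ℝ≥0∞ := μH[(d : ℝ) - 1] (closedBall (0 : EuclideanSpace ℝ (Fin (d - 1))) 1) with hVB
  set A : ℝ := ((L : ℝ≥0∞) ^ ((d : ℝ) - 1) * VB).toReal with hA
  have hA0 : 0 ≤ A := ENNReal.toReal_nonneg
  refine ⟨C₁ * A + 1, by positivity, ?_⟩
  intro T Γ h hh _hconv hdiam ⟨z, hz⟩ ⟨e, z₀, f, he, hf, hΓ⟩ v ⟨p, hpk, hpv⟩
  have hveq : v = pe p := funext hpv
  subst hveq
  simp only [Real.norm_eq_abs, sq_abs]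
  set I : ℝ := ∫ x in T, (pe p x) ^ 2 with hI
  have hI0 : 0 ≤ I := integral_nonneg fun x => sq_nonneg _
  -- dimension at least one
  have hd : 1 ≤ d := by
    by_contra hc
    have hd0 : d = 0 := by omega
    subst hd0
    have : e = 0 := by ext i; exact i.elim0
    rw [this] at he
    simp at he
  have hdm : (0 : ℝ) ≤ (d : ℝ) - 1 := by
    have : (1 : ℝ) ≤ (d : ℝ) := by exact_mod_cast hd
    linarith
  -- geometry of T
  have hbound : Bornology.IsBounded T := by
    by_contra hc
    rw [Metric.diam_eq_zero_of_unbounded hc] at hdiam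
    linarith
  have hzT : z ∈ T := hz (mem_closedBall_self (by positivity))
  have hTsub : T ⊆ closedBall z h := fun x hx =>
    mem_closedBall.2 ((Metric.dist_le_diam_of_mem hbound hx hzT).trans_eq hdiam)
  -- integrability over T
  have hIT : IntegrableOn (fun x => (pe p x) ^ 2) T volume :=
    (((pe_continuous p).pow 2).continuousOn.integrableOn_compact
      (isCompact_closedBall z h)).mono_set hTsub
  have hIball : ∫ x in closedBall z (ρ * h), (pe p x) ^ 2 ≤ I := by
    refine setIntegral_mono_set hIT ?_ (HasSubset.Subset.eventuallyLE hz)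
    exact Filter.Eventually.of_forall fun x => sq_nonneg _
  -- scaled polynomial and pointwise sup bound on T
  set q := MvPolynomial.bind₁
    (fun i => MvPolynomial.C (z i) + MvPolynomial.C h * MvPolynomial.X i) p with hq
  have hqk : q.totalDegree ≤ k := (totalDegree_affine z h p).trans hpk
  have hsup : ∀ x ∈ closedBall z h, (pe p x) ^ 2 ≤ C₁ * (h ^ d)⁻¹ * I := by
    intro x hx
    have hy : h⁻¹ • (x - z) ∈ closedBall (0 : EuclideanSpace ℝ (Fin d)) 1 := by
      rw [mem_closedBall, dist_zero_right, norm_smul, Real.norm_eq_abs,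
        abs_of_pos (inv_pos.2 hh)]
      rw [mem_closedBall, dist_eq_norm] at hx
      calc h⁻¹ * ‖x - z‖ ≤ h⁻¹ * h := by
            exact mul_le_mul_of_nonneg_left hx (le_of_lt (inv_pos.2 hh))
        _ = 1 := inv_mul_cancel₀ (ne_of_gt hh)
    have hxy : z + h • (h⁻¹ • (x - z)) = x := by
      rw [smul_smul, mul_inv_cancel₀ (ne_of_gt hh), one_smul]
      abel
    have hest := hC₁est q hqk _ hy
    rw [pe_bind₁_affine, hxy] at hest
    have hcv : ∫ y in closedBall (0 : EuclideanSpace ℝ (Fin d)) ρ, (pe q y) ^ 2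
        = (h ^ d)⁻¹ * ∫ x in closedBall z (ρ * h), (pe p x) ^ 2 := by
      simp only [hq, pe_bind₁_affine]
      exact scale_integral p z hh (le_of_lt hρ)
    rw [hcv] at hest
    calc (pe p x) ^ 2 ≤ C₁ * ((h ^ d)⁻¹ * ∫ x in closedBall z (ρ * h), (pe p x) ^ 2) := hest
      _ ≤ C₁ * ((h ^ d)⁻¹ * I) := by
          have hinv : (0:ℝ) ≤ (h ^ d)⁻¹ := by positivity
          have := mul_le_mul_of_nonneg_left hIball hinv
          nlinarith
      _ = C₁ * (h ^ d)⁻¹ * I := by ring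
  -- split on emptiness of the plane section
  by_cases hST : ({y : EuclideanSpace ℝ (Fin d) | ⟪y - z₀, e⟫ = 0} ∩ T) = ∅
  · rw [hΓ, hST, Set.image_empty]
    have : (∫ x in (∅ : Set (EuclideanSpace ℝ (Fin d))), (pe p x) ^ 2
        ∂(Measure.hausdorffMeasure ((d : ℝ) - 1))) = 0 := by
      rw [Measure.restrict_empty, integral_zero_measure]
    rw [this]
    have hhinv : (0:ℝ) ≤ h⁻¹ := le_of_lt (inv_pos.2 hh)
    positivity
  · obtain ⟨w, hwS, hwT⟩ := Set.nonempty_iff_ne_empty.2 hST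
    have hSsub : {y : EuclideanSpace ℝ (Fin d) | ⟪y - z₀, e⟫ = 0} ∩ T ⊆
        {y : EuclideanSpace ℝ (Fin d) | ⟪y - z₀, e⟫ = 0} ∩ closedBall w h := by
      rintro y ⟨h1, h2⟩
      exact ⟨h1, mem_closedBall.2 ((Metric.dist_le_diam_of_mem hbound h2 hwT).trans_eq hdiam)⟩
    have hμΓ : μH[(d : ℝ) - 1] (Γ ∩ T) ≤
        (L : ℝ≥0∞) ^ ((d : ℝ) - 1) * (((‖h‖₊ : ℝ≥0∞) ^ ((d : ℝ) - 1)) * VB) := by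
      rw [hΓ]
      calc μH[(d : ℝ) - 1] (f '' ({y : EuclideanSpace ℝ (Fin d) | ⟪y - z₀, e⟫ = 0} ∩ T))
          ≤ (L : ℝ≥0∞) ^ ((d : ℝ) - 1) *
            μH[(d : ℝ) - 1] ({y : EuclideanSpace ℝ (Fin d) | ⟪y - z₀, e⟫ = 0} ∩ T) :=
            hf.hausdorffMeasure_image_le hdm _
        _ ≤ (L : ℝ≥0∞) ^ ((d : ℝ) - 1) * (((‖h‖₊ : ℝ≥0∞) ^ ((d : ℝ) - 1)) * VB) := by
            refine mul_le_mul_right ?_ _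
            refine (measure_mono hSsub).trans ?_
            exact hyperplane_cap_bound hd z₀ w he hwS hh
    have hRfin : (L : ℝ≥0∞) ^ ((d : ℝ) - 1) * (((‖h‖₊ : ℝ≥0∞) ^ ((d : ℝ) - 1)) * VB) ≠ ⊤ := by
      have hVBfin : VB ≠ ⊤ := by
        have hcast : ((d - 1 : ℕ) : ℝ) = (d : ℝ) - 1 := by
          rw [Nat.cast_sub hd, Nat.cast_one]
        rw [hVB, ← hcast]
        exact (VB_lt_top (d - 1)).ne
      exact ENNReal.mul_ne_top (ENNReal.rpow_ne_top_of_nonneg hdm ENNReal.coe_ne_top)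
        (ENNReal.mul_ne_top (ENNReal.rpow_ne_top_of_nonneg hdm ENNReal.coe_ne_top) hVBfin)
    have hμfin : μH[(d : ℝ) - 1] (Γ ∩ T) < ⊤ := lt_of_le_of_lt hμΓ (hRfin.lt_top)
    have htoReal : (μH[(d : ℝ) - 1] (Γ ∩ T)).toReal ≤ A * h ^ ((d : ℝ) - 1) := by
      refine (ENNReal.toReal_mono hRfin hμΓ).trans_eq ?_
      rw [ENNReal.toReal_mul, ENNReal.toReal_mul, hA, ENNReal.toReal_mul]
      have h1 : ((‖h‖₊ : ℝ≥0∞) ^ ((d : ℝ) - 1)).toReal = h ^ ((d : ℝ) - 1) := by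
        rw [← ENNReal.toReal_rpow, ENNReal.coe_toReal, coe_nnnorm, Real.norm_eq_abs,
          abs_of_pos hh]
      rw [h1]
      ring
    -- bound the surface integral
    have hptb : ∀ x ∈ Γ ∩ T, ‖(pe p x) ^ 2‖ ≤ C₁ * (h ^ d)⁻¹ * I := by
      intro x hx
      rw [Real.norm_eq_abs, abs_of_nonneg (sq_nonneg _)]
      exact hsup x (hTsub hx.2)
    have hmeas : AEStronglyMeasurable (fun x => (pe p x) ^ 2)
        ((Measure.hausdorffMeasure ((d : ℝ) - 1)).restrict (Γ ∩ T)) :=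
      ((pe_continuous p).pow 2).aestronglyMeasurable
    have hLHS : (∫ x in Γ ∩ T, (pe p x) ^ 2 ∂(Measure.hausdorffMeasure ((d : ℝ) - 1)))
        ≤ (C₁ * (h ^ d)⁻¹ * I) * (μH[(d : ℝ) - 1] (Γ ∩ T)).toReal := by
      have := norm_setIntegral_le_of_norm_le_const (μ := Measure.hausdorffMeasure ((d : ℝ) - 1))
        hμfin hptb
      calc (∫ x in Γ ∩ T, (pe p x) ^ 2 ∂(Measure.hausdorffMeasure ((d : ℝ) - 1)))
          ≤ ‖∫ x in Γ ∩ T, (pe p x) ^ 2 ∂(Measure.hausdorffMeasure ((d : ℝ) - 1))‖ :=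
            le_abs_self _
        _ ≤ _ := this
    have hCsup : 0 ≤ C₁ * (h ^ d)⁻¹ * I := by positivity
    have hexp : (h ^ d)⁻¹ * h ^ ((d : ℝ) - 1) = h⁻¹ := by
      rw [show (h : ℝ) ^ d = h ^ ((d : ℕ) : ℝ) from (Real.rpow_natCast h d).symm]
      rw [← Real.rpow_neg_one h, ← Real.rpow_neg (le_of_lt hh), ← Real.rpow_add hh]
      congr 1
      ring
    calc (∫ x in Γ ∩ T, (pe p x) ^ 2 ∂(Measure.hausdorffMeasure ((d : ℝ) - 1)))
        ≤ (C₁ * (h ^ d)⁻¹ * I) * (μH[(d : ℝ) - 1] (Γ ∩ T)).toReal := hLHS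
      _ ≤ (C₁ * (h ^ d)⁻¹ * I) * (A * h ^ ((d : ℝ) - 1)) :=
          mul_le_mul_of_nonneg_left htoReal hCsup
      _ = (C₁ * A) * ((h ^ d)⁻¹ * h ^ ((d : ℝ) - 1)) * I := by ring
      _ = (C₁ * A) * h⁻¹ * I := by rw [hexp]
      _ ≤ (C₁ * A + 1) * h⁻¹ * I := by
          have hhi : (0:ℝ) ≤ h⁻¹ := le_of_lt (inv_pos.2 hh)
          nlinarith
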